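/- Let α > 3/2 and define g(s,y) := p̃(s,0,y) y^{α−1} = C y^{α+1} s^{−3/2} exp(−y²/(4s)) (for a normalizing constant C). Then there exists K > 0 such that for every d ≥ 0 and t ∈ (0,T], ∫₀^t ∫₀^∞ [g(t−s, y+d) − g(t−s, y)]² dy ds ≤ K ∫₀^t d² (t−s)^{α−5/2} ds, and in particular this integral is finite since α − 5/2 > −1. -/

import Mathlib

open MeasureTheory Real

noncomputable def heatp (s x y : ℝ) : ℝ :=
  (1 / Real.sqrt (4 * Real.pi * s)) *
    (Real.exp (-(x - y) ^ 2 / (4 * s)) - Real.exp (-(x + y) ^ 2 / (4 * s)))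

noncomputable def ptilde (s x y : ℝ) : ℝ :=
  if x = 0 then y ^ 2 / (s * Real.sqrt (4 * Real.pi * s)) * Real.exp (-y ^ 2 / (4 * s))
  else (y / x) * heatp s x y

open Set

noncomputable def Jc (q : ℝ) : ℝ := 2 ^ ((q+1)/2) * ((1/2) * Real.Gamma ((q+1)/2))

lemma Jc_pos {q : ℝ} (hq : -1 < q) : 0 < Jc q := by
  have h : 0 < Real.Gamma ((q+1)/2) := Real.Gamma_pos_of_pos (by linarith)
  have h2 : (0:ℝ) < 2 ^ ((q+1)/2) := Real.rpow_pos_of_pos (by norm_num) _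
  unfold Jc; positivity

lemma Jscale {q τ : ℝ} (hq : -1 < q) (hτ : 0 < τ) :
    ∫ y in Ioi (0:ℝ), y ^ q * Real.exp (-(1/(2*τ)) * y^2) = Jc q * τ ^ ((q+1)/2) := by
  have h := integral_rpow_mul_exp_neg_mul_rpow (p := 2) (q := q) (b := 1/(2*τ))
    two_pos hq (by positivity)
  rw [show ∫ y in Ioi (0:ℝ), y ^ q * Real.exp (-(1/(2*τ)) * y^2)
      = ∫ x in Ioi (0:ℝ), x ^ q * Real.exp (-(1/(2*τ)) * x ^ (2:ℝ)) from by
    refine setIntegral_congr_fun measurableSet_Ioi (fun x hx => ?_)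
    rw [Real.rpow_two], h]
  have hb : ((1:ℝ)/(2*τ)) ^ (-(q+1)/2) = 2 ^ ((q+1)/2) * τ ^ ((q+1)/2) := by
    rw [one_div, neg_div, Real.inv_rpow (by positivity), Real.rpow_neg (by positivity),
      inv_inv, Real.mul_rpow (by norm_num) hτ.le]
  rw [hb, Jc]; ring

lemma sqrpow (z p : ℝ) (hz : 0 ≤ z) : (z ^ p)^2 = z ^ (2*p) := by
  rw [← Real.rpow_natCast (z^p) 2, ← Real.rpow_mul hz]
  congr 1; push_cast; ring

lemma sqG (z α τ : ℝ) (hz : 0 < z) (hτ : 0 < τ) :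
    (z^(α+1) * Real.exp (-z^2/(4*τ)))^2 = z^(2*α+2) * Real.exp (-(1/(2*τ)) * z^2) := by
  rw [mul_pow, ← Real.rpow_natCast (z^(α+1)) 2, ← Real.rpow_mul hz.le, ← Real.exp_nat_mul]
  congr 1
  · congr 1; push_cast; ring
  · congr 1; field_simp; ring
lemma Qpoint {p τ : ℝ} (hp : 0 ≤ p) (hτ : 0 < τ) {y : ℝ} (hy : 0 ≤ y) :
    (y + Real.sqrt τ) ^ p ≤ 2 ^ p * (y ^ p + τ ^ (p/2)) := by
  have hs : 0 < Real.sqrt τ := Real.sqrt_pos.mpr hτ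
  have h1 : y + Real.sqrt τ ≤ 2 * max y (Real.sqrt τ) := by
    have := le_max_left y (Real.sqrt τ); have := le_max_right y (Real.sqrt τ); linarith
  calc (y + Real.sqrt τ) ^ p ≤ (2 * max y (Real.sqrt τ)) ^ p :=
        Real.rpow_le_rpow (by positivity) h1 hp
    _ = 2 ^ p * (max y (Real.sqrt τ)) ^ p := Real.mul_rpow (by norm_num) (by positivity)
    _ ≤ 2 ^ p * (y ^ p + τ ^ (p/2)) := by
        gcongr 2 ^ p * ?_
        have hst : (Real.sqrt τ) ^ p = τ ^ (p/2) := by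
          rw [Real.sqrt_eq_rpow, ← Real.rpow_mul hτ.le]; norm_num; ring_nf
        rcases max_cases y (Real.sqrt τ) with ⟨h, _⟩ | ⟨h, _⟩ <;> rw [h]
        · have : (0:ℝ) ≤ τ ^ (p/2) := by positivity
          linarith
        · rw [hst]
          have : (0:ℝ) ≤ y ^ p := Real.rpow_nonneg hy p
          linarith

lemma Qint {p τ : ℝ} (hp : 0 ≤ p) (hτ : 0 < τ) :
    IntegrableOn (fun y => (y + Real.sqrt τ) ^ p * Real.exp (-(1/(2*τ)) * y^2)) (Ioi (0:ℝ)) ∧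
    ∫ y in Ioi (0:ℝ), (y + Real.sqrt τ) ^ p * Real.exp (-(1/(2*τ)) * y^2)
      ≤ 2 ^ p * (Jc p + Jc 0) * τ ^ ((p+1)/2) := by
  have hb : (0:ℝ) < 1/(2*τ) := by positivity
  have hF : IntegrableOn (fun y : ℝ => y ^ p * Real.exp (-(1/(2*τ)) * y^2)) (Ioi 0) :=
    integrableOn_rpow_mul_exp_neg_mul_sq hb (by linarith)
  have hE : IntegrableOn (fun y : ℝ => Real.exp (-(1/(2*τ)) * y^2)) (Ioi 0) := by
    have := integrableOn_rpow_mul_exp_neg_mul_sq (s := 0) hb (by norm_num)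
    simpa using this
  have hh : IntegrableOn
      (fun y : ℝ => 2 ^ p * (y ^ p + τ ^ (p/2)) * Real.exp (-(1/(2*τ)) * y^2)) (Ioi 0) := by
    have : IntegrableOn
        (fun y : ℝ => 2 ^ p * (y ^ p * Real.exp (-(1/(2*τ)) * y^2))
          + 2 ^ p * τ ^ (p/2) * Real.exp (-(1/(2*τ)) * y^2)) (Ioi 0) :=
      (hF.const_mul _).add (hE.const_mul _)
    refine this.congr_fun (fun y _ => by ring) measurableSet_Ioi
  have hmeas : AEStronglyMeasurable
      (fun y => (y + Real.sqrt τ) ^ p * Real.exp (-(1/(2*τ)) * y^2))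
      (volume.restrict (Ioi (0:ℝ))) := by
    apply ContinuousOn.aestronglyMeasurable _ measurableSet_Ioi
    exact ((continuousOn_id.add continuousOn_const).rpow_const
      (fun y _ => Or.inr hp)).mul (Real.continuous_exp.comp (by fun_prop)).continuousOn
  have hptle : ∀ y ∈ Ioi (0:ℝ),
      (y + Real.sqrt τ) ^ p * Real.exp (-(1/(2*τ)) * y^2)
        ≤ 2 ^ p * (y ^ p + τ ^ (p/2)) * Real.exp (-(1/(2*τ)) * y^2) := by
    intro y hy
    have := Qpoint hp hτ (le_of_lt hy)
    exact mul_le_mul_of_nonneg_right this (Real.exp_nonneg _)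
  have hint : IntegrableOn (fun y => (y + Real.sqrt τ) ^ p * Real.exp (-(1/(2*τ)) * y^2))
      (Ioi (0:ℝ)) := by
    refine hh.mono' hmeas ?_
    filter_upwards [ae_restrict_mem measurableSet_Ioi] with y hy
    have hy' : (0:ℝ) < y := hy
    rw [Real.norm_eq_abs, abs_of_nonneg (by positivity)]
    exact hptle y hy
  refine ⟨hint, ?_⟩
  calc ∫ y in Ioi (0:ℝ), (y + Real.sqrt τ) ^ p * Real.exp (-(1/(2*τ)) * y^2)
      ≤ ∫ y in Ioi (0:ℝ), 2 ^ p * (y ^ p + τ ^ (p/2)) * Real.exp (-(1/(2*τ)) * y^2) := by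
        refine setIntegral_mono_on hint hh measurableSet_Ioi hptle
    _ = 2 ^ p * (Jc p + Jc 0) * τ ^ ((p+1)/2) := by
        have h0 : ∫ y in Ioi (0:ℝ), Real.exp (-(1/(2*τ)) * y^2) = Jc 0 * τ ^ (((0:ℝ)+1)/2) := by
          rw [← Jscale (by norm_num : (-1:ℝ) < 0) hτ]
          refine setIntegral_congr_fun measurableSet_Ioi (fun y _ => by
            rw [Real.rpow_zero, one_mul])
        have e1 : ∫ y in Ioi (0:ℝ), 2 ^ p * (y ^ p + τ ^ (p/2)) * Real.exp (-(1/(2*τ)) * y^2)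
            = 2 ^ p * (∫ y in Ioi (0:ℝ), y ^ p * Real.exp (-(1/(2*τ)) * y^2))
              + (2 ^ p * τ ^ (p/2)) * ∫ y in Ioi (0:ℝ), Real.exp (-(1/(2*τ)) * y^2) := by
          rw [← integral_const_mul, ← integral_const_mul,
            ← integral_add (hF.const_mul _) (hE.const_mul _)]
          exact setIntegral_congr_fun measurableSet_Ioi (fun y _ => by ring)
        rw [e1, Jscale (by linarith) hτ, h0]
        have h01 : ((0:ℝ)+1)/2 = 1/2 := by norm_num
        rw [h01]
        have hτp : τ ^ (p/2) * τ ^ ((1:ℝ)/2) = τ ^ ((p+1)/2) := by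
          rw [← Real.rpow_add hτ]; congr 1; ring
        linear_combination (2 ^ p * Jc 0) * hτp
lemma Gderiv (α τ : ℝ) (hτ : 0 < τ) {u : ℝ} (hu : 0 < u) :
    HasDerivAt (fun y : ℝ => y ^ (α+1) * Real.exp (-y^2/(4*τ)))
      (((α+1) * u ^ α - u ^ (α+2) / (2*τ)) * Real.exp (-u^2/(4*τ))) u := by
  have h1 : HasDerivAt (fun y : ℝ => y ^ (α+1)) ((α+1) * u ^ (α+1-1)) u := by
    simpa using Real.hasDerivAt_rpow_const (p := α+1) (Or.inl hu.ne')
  have h2 : HasDerivAt (fun y : ℝ => -y^2/(4*τ)) (-(1/(4*τ)) * (2*u)) u := by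
    have h := (hasDerivAt_pow 2 u).const_mul (-(1/(4*τ)))
    rw [show (fun y:ℝ => -y^2/(4*τ)) = fun y:ℝ => -(1/(4*τ)) * y^2 from funext fun y => by ring]
    exact h.congr_deriv (by norm_num)
  have hm := h1.mul h2.exp
  refine hm.congr_deriv ?_
  have e1 : u ^ (α+1-1) = u ^ α := by norm_num
  have e2 : u ^ (α+2) = u ^ (α+1) * u := by
    rw [show α+2 = (α+1)+1 by ring, Real.rpow_add hu, Real.rpow_one]
  rw [e1, e2]
  field_simp
  ring

lemma Gmvt (α τ d y : ℝ) (hα : 0 < α) (hτ : 0 < τ) (hd : 0 ≤ d) (hy : 0 < y)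
    (hdτ : d ≤ Real.sqrt τ) :
    |(y+d) ^ (α+1) * Real.exp (-(y+d)^2/(4*τ)) - y ^ (α+1) * Real.exp (-y^2/(4*τ))|
      ≤ (((α+1) * (y + Real.sqrt τ) ^ α + (y + Real.sqrt τ) ^ (α+2) / (2*τ))
          * Real.exp (-y^2/(4*τ))) * d := by
  set C := ((α+1) * (y + Real.sqrt τ) ^ α + (y + Real.sqrt τ) ^ (α+2) / (2*τ))
      * Real.exp (-y^2/(4*τ)) with hC
  have hconv : Convex ℝ (Icc y (y+d)) := convex_Icc _ _
  have key := hconv.norm_image_sub_le_of_norm_hasDerivWithin_le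
    (f := fun y : ℝ => y ^ (α+1) * Real.exp (-y^2/(4*τ)))
    (f' := fun u => ((α+1) * u ^ α - u ^ (α+2) / (2*τ)) * Real.exp (-u^2/(4*τ)))
    (C := C)
    (fun u hu => (Gderiv α τ hτ (lt_of_lt_of_le hy hu.1)).hasDerivWithinAt)
    (fun u hu => ?_) (left_mem_Icc.mpr (by linarith)) (right_mem_Icc.mpr (by linarith))
  · have := key
    rw [Real.norm_eq_abs, Real.norm_eq_abs] at this
    have : |(y+d) ^ (α+1) * Real.exp (-(y+d)^2/(4*τ)) - y ^ (α+1) * Real.exp (-y^2/(4*τ))|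
        ≤ C * |y + d - y| := this
    simpa [abs_of_nonneg hd] using this
  · obtain ⟨hu1, hu2⟩ := hu
    have hu0 : 0 < u := lt_of_lt_of_le hy hu1
    have husb : u ≤ y + Real.sqrt τ := by linarith
    have hyb : 0 < y + Real.sqrt τ := by positivity
    rw [Real.norm_eq_abs, abs_mul, Real.abs_exp]
    have habs : |(α+1) * u ^ α - u ^ (α+2) / (2*τ)|
        ≤ (α+1) * (y + Real.sqrt τ) ^ α + (y + Real.sqrt τ) ^ (α+2) / (2*τ) := by
      have t1 : u ^ α ≤ (y + Real.sqrt τ) ^ α :=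
        Real.rpow_le_rpow hu0.le husb (by linarith)
      have t2 : u ^ (α+2) ≤ (y + Real.sqrt τ) ^ (α+2) :=
        Real.rpow_le_rpow hu0.le husb (by linarith)
      have n1 : (0:ℝ) ≤ u ^ α := Real.rpow_nonneg hu0.le _
      have n2 : (0:ℝ) ≤ u ^ (α+2) := Real.rpow_nonneg hu0.le _
      rw [abs_sub_comm]
      calc |u ^ (α+2) / (2*τ) - (α+1) * u ^ α|
          ≤ |u ^ (α+2) / (2*τ)| + |(α+1) * u ^ α| := abs_sub _ _
        _ = u ^ (α+2) / (2*τ) + (α+1) * u ^ α := by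
            rw [abs_of_nonneg (by positivity), abs_of_nonneg (by positivity)]
        _ ≤ (α+1) * (y + Real.sqrt τ) ^ α + (y + Real.sqrt τ) ^ (α+2) / (2*τ) := by
            have : u ^ (α+2) / (2*τ) ≤ (y + Real.sqrt τ) ^ (α+2) / (2*τ) := by gcongr
            nlinarith [t1]
    have hexp : Real.exp (-u^2/(4*τ)) ≤ Real.exp (-y^2/(4*τ)) := by
      apply Real.exp_le_exp.mpr
      have : y^2 ≤ u^2 := by nlinarith
      have h4 : (0:ℝ) < 4*τ := by linarith
      rw [div_le_div_iff₀ h4 h4]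
      nlinarith
    calc |(α+1) * u ^ α - u ^ (α+2) / (2*τ)| * Real.exp (-u^2/(4*τ))
        ≤ ((α+1) * (y + Real.sqrt τ) ^ α + (y + Real.sqrt τ) ^ (α+2) / (2*τ))
            * Real.exp (-y^2/(4*τ)) :=
          mul_le_mul habs hexp (Real.exp_nonneg _) (by positivity)
      _ = C := hC.symm
lemma coreB (α : ℝ) (hα : 3/2 < α) {τ : ℝ} (hτ : 0 < τ) {d : ℝ} (hd : 0 ≤ d)
    (hcase : d ^ 2 ≤ τ) :
    (∫ y in Ioi (0:ℝ), ((y+d) ^ (α+1) * Real.exp (-(y+d)^2/(4*τ))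
        - y ^ (α+1) * Real.exp (-y^2/(4*τ)))^2)
      ≤ (2*(α+1)^2 * (2^(2*α) * (Jc (2*α) + Jc 0))
          + (1/2) * (2^(2*α+4) * (Jc (2*α+4) + Jc 0))) * (d^2 * τ ^ (α + 1/2)) := by
  have hα0 : (0:ℝ) < α := by linarith
  have hdτ : d ≤ Real.sqrt τ := (Real.le_sqrt hd hτ.le).mpr hcase
  set Q : ℝ → ℝ → ℝ := fun p y => (y + Real.sqrt τ) ^ p * Real.exp (-(1/(2*τ)) * y^2) with hQ
  set h : ℝ → ℝ := fun y =>
    d^2 * ((2*(α+1)^2) * Q (2*α) y + (1/(2*τ^2)) * Q (2*α+4) y) with hh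
  have hQ1 := Qint (p := 2*α) (by linarith) hτ
  have hQ2 := Qint (p := 2*α+4) (by linarith) hτ
  have hhi : IntegrableOn h (Ioi 0) :=
    (((hQ1.1.const_mul _).add (hQ2.1.const_mul _)).const_mul _)
  -- pointwise bound
  have hpt : ∀ y ∈ Ioi (0:ℝ),
      ((y+d) ^ (α+1) * Real.exp (-(y+d)^2/(4*τ))
        - y ^ (α+1) * Real.exp (-y^2/(4*τ)))^2 ≤ h y := by
    intro y hy
    have hy0 : (0:ℝ) < y := hy
    have hmvt := Gmvt α τ d y hα0 hτ hd hy0 hdτ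
    set Δ := (y+d) ^ (α+1) * Real.exp (-(y+d)^2/(4*τ)) - y ^ (α+1) * Real.exp (-y^2/(4*τ))
    set A := (y + Real.sqrt τ) ^ α
    set B := (y + Real.sqrt τ) ^ (α+2)
    set e := Real.exp (-y^2/(4*τ))
    have h1 : Δ^2 ≤ ((((α+1)*A + B/(2*τ)) * e) * d)^2 := by
      have hn : (0:ℝ) ≤ (((α+1)*A + B/(2*τ)) * e) * d := le_trans (abs_nonneg _) hmvt
      calc Δ^2 = |Δ|^2 := (sq_abs _).symm
        _ ≤ ((((α+1)*A + B/(2*τ)) * e) * d)^2 := by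
            exact pow_le_pow_left₀ (abs_nonneg _) hmvt 2
    refine h1.trans ?_
    have hyb : (0:ℝ) < y + Real.sqrt τ := by
      have := Real.sqrt_nonneg τ; linarith
    have hA2 : A^2 = (y + Real.sqrt τ) ^ (2*α) := sqrpow _ _ hyb.le
    have hB2 : B^2 = (y + Real.sqrt τ) ^ (2*α+4) := by
      rw [sqrpow _ _ hyb.le]; congr 1; ring
    have he2 : e^2 = Real.exp (-(1/(2*τ)) * y^2) := by
      rw [← Real.exp_nat_mul]; congr 1; field_simp; ring
    have expand : ((((α+1)*A + B/(2*τ)) * e) * d)^2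
        = d^2 * (((α+1)*A + B/(2*τ))^2 * e^2) := by ring
    rw [expand]
    have key : ((α+1)*A + B/(2*τ))^2 ≤ 2*((α+1)*A)^2 + 2*(B/(2*τ))^2 := by
      nlinarith [sq_nonneg ((α+1)*A - B/(2*τ))]
    have key2 : ((α+1)*A + B/(2*τ))^2 * e^2
        ≤ (2*((α+1)*A)^2 + 2*(B/(2*τ))^2) * e^2 :=
      mul_le_mul_of_nonneg_right key (sq_nonneg e)
    have final : d^2 * (((α+1)*A + B/(2*τ))^2 * e^2)
        ≤ d^2 * ((2*((α+1)*A)^2 + 2*(B/(2*τ))^2) * e^2) :=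
      mul_le_mul_of_nonneg_left key2 (sq_nonneg d)
    refine final.trans_eq ?_
    have hτne : τ ≠ 0 := hτ.ne'
    calc d^2 * ((2*((α+1)*A)^2 + 2*(B/(2*τ))^2) * e^2)
        = d^2 * (2*(α+1)^2 * (A^2 * e^2) + (1/(2*τ^2)) * (B^2 * e^2)) := by
          field_simp
      _ = h y := by
          rw [hA2, hB2, he2]
  -- integrate
  have step1 : (∫ y in Ioi (0:ℝ), ((y+d) ^ (α+1) * Real.exp (-(y+d)^2/(4*τ))
      - y ^ (α+1) * Real.exp (-y^2/(4*τ)))^2) ≤ ∫ y in Ioi (0:ℝ), h y := by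
    refine integral_mono_of_nonneg (Filter.Eventually.of_forall (fun y => sq_nonneg _)) hhi ?_
    filter_upwards [ae_restrict_mem measurableSet_Ioi] with y hy
    exact hpt y hy
  refine step1.trans ?_
  have hsplit : ∫ y in Ioi (0:ℝ), h y
      = d^2 * ((2*(α+1)^2) * (∫ y in Ioi (0:ℝ), Q (2*α) y)
          + (1/(2*τ^2)) * ∫ y in Ioi (0:ℝ), Q (2*α+4) y) := by
    rw [hh]
    rw [integral_const_mul, integral_add (hQ1.1.const_mul _) (hQ2.1.const_mul _),
      integral_const_mul, integral_const_mul]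
  rw [hsplit]
  have hτ1 : τ ^ ((2*α+1)/2) = τ ^ (α+1/2) := by congr 1; ring
  have hτ2 : τ ^ ((2*α+4+1)/2) = τ^2 * τ ^ (α+1/2) := by
    rw [show (2*α+4+1)/2 = 2 + (α+1/2) by ring, Real.rpow_add hτ]
    congr 1
    rw [show (2:ℝ) = ((2:ℕ):ℝ) by norm_num, Real.rpow_natCast]
  have b1 : (∫ y in Ioi (0:ℝ), Q (2*α) y) ≤ 2^(2*α) * (Jc (2*α) + Jc 0) * τ ^ (α+1/2) := by
    have := hQ1.2; rw [show (2*α+1)/2 = (α+1/2) by ring] at this; exact this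
  have b2 : (∫ y in Ioi (0:ℝ), Q (2*α+4) y)
      ≤ 2^(2*α+4) * (Jc (2*α+4) + Jc 0) * (τ^2 * τ ^ (α+1/2)) := by
    have := hQ2.2; rw [hτ2] at this; exact this
  have hq1n : (0:ℝ) ≤ ∫ y in Ioi (0:ℝ), Q (2*α) y :=
    setIntegral_nonneg measurableSet_Ioi (fun y hy => by
      have : (0:ℝ) < y := hy
      positivity)
  have hq2n : (0:ℝ) ≤ ∫ y in Ioi (0:ℝ), Q (2*α+4) y :=
    setIntegral_nonneg measurableSet_Ioi (fun y hy => by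
      have : (0:ℝ) < y := hy
      positivity)
  have hτp : (0:ℝ) < τ ^ (α+1/2) := Real.rpow_pos_of_pos hτ _
  have c1 : (0:ℝ) ≤ 2*(α+1)^2 := by positivity
  have c2 : (0:ℝ) < 1/(2*τ^2) := by positivity
  calc d^2 * ((2*(α+1)^2) * (∫ y in Ioi (0:ℝ), Q (2*α) y)
          + (1/(2*τ^2)) * ∫ y in Ioi (0:ℝ), Q (2*α+4) y)
      ≤ d^2 * ((2*(α+1)^2) * (2^(2*α) * (Jc (2*α) + Jc 0) * τ ^ (α+1/2))
          + (1/(2*τ^2)) * (2^(2*α+4) * (Jc (2*α+4) + Jc 0) * (τ^2 * τ ^ (α+1/2))))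
        := by
          apply mul_le_mul_of_nonneg_left _ (sq_nonneg d)
          gcongr
    _ = (2*(α+1)^2 * (2^(2*α) * (Jc (2*α) + Jc 0))
          + (1/2) * (2^(2*α+4) * (Jc (2*α+4) + Jc 0))) * (d^2 * τ ^ (α + 1/2)) := by
          field_simp
lemma coreA (α : ℝ) (hα : 3/2 < α) {τ : ℝ} (hτ : 0 < τ) {d : ℝ} (hd : 0 ≤ d)
    (hcase : τ ≤ d ^ 2) :
    (∫ y in Ioi (0:ℝ), ((y+d) ^ (α+1) * Real.exp (-(y+d)^2/(4*τ))
        - y ^ (α+1) * Real.exp (-y^2/(4*τ)))^2)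
      ≤ (4 * Jc (2*α+2)) * (d^2 * τ ^ (α + 1/2)) := by
  have hb : (0:ℝ) < 1/(2*τ) := by positivity
  set F : ℝ → ℝ := fun y => y ^ (2*α+2) * Real.exp (-(1/(2*τ)) * y^2) with hF
  have hFi : IntegrableOn F (Ioi 0) :=
    integrableOn_rpow_mul_exp_neg_mul_sq hb (by linarith)
  have hpre : (fun y : ℝ => y + d) ⁻¹' (Ioi d) = Ioi (0:ℝ) := by
    ext y; simp
  have hmp := measurePreserving_add_right (volume : Measure ℝ) d
  have hemb : MeasurableEmbedding (fun y : ℝ => y + d) := measurableEmbedding_addRight d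
  have hFid : IntegrableOn F (Ioi d) := hFi.mono_set (Ioi_subset_Ioi hd)
  have hFdi : IntegrableOn (fun y => F (y + d)) (Ioi 0) := by
    have := (hmp.integrableOn_comp_preimage hemb).mpr hFid
    rwa [hpre] at this
  have htrans : ∫ y in Ioi (0:ℝ), F (y + d) = ∫ y in Ioi d, F y := by
    have := hmp.setIntegral_preimage_emb hemb F (Ioi d)
    rwa [hpre] at this
  have hmono : ∫ y in Ioi d, F y ≤ ∫ y in Ioi (0:ℝ), F y := by
    apply setIntegral_mono_set hFi
    · filter_upwards [ae_restrict_mem measurableSet_Ioi] with y hy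
      have hy0 : (0:ℝ) < y := hy
      simp only [hF]; positivity
    · exact (Ioi_subset_Ioi hd).eventuallyLE
  have hpt : ∀ y ∈ Ioi (0:ℝ),
      ((y+d) ^ (α+1) * Real.exp (-(y+d)^2/(4*τ))
        - y ^ (α+1) * Real.exp (-y^2/(4*τ)))^2 ≤ 2 * F (y + d) + 2 * F y := by
    intro y hy
    have hy0 : (0:ℝ) < y := hy
    have hyd : (0:ℝ) < y + d := by linarith
    have e1 := sqG (y+d) α τ hyd hτ
    have e2 := sqG y α τ hy0 hτ
    have h2 : ((y+d) ^ (α+1) * Real.exp (-(y+d)^2/(4*τ))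
        - y ^ (α+1) * Real.exp (-y^2/(4*τ)))^2
        ≤ 2 * ((y+d) ^ (α+1) * Real.exp (-(y+d)^2/(4*τ)))^2
          + 2 * (y ^ (α+1) * Real.exp (-y^2/(4*τ)))^2 := by
      nlinarith [sq_nonneg ((y+d) ^ (α+1) * Real.exp (-(y+d)^2/(4*τ))
        + y ^ (α+1) * Real.exp (-y^2/(4*τ)))]
    rw [e1, e2] at h2
    exact h2
  calc (∫ y in Ioi (0:ℝ), ((y+d) ^ (α+1) * Real.exp (-(y+d)^2/(4*τ))
        - y ^ (α+1) * Real.exp (-y^2/(4*τ)))^2)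
      ≤ ∫ y in Ioi (0:ℝ), (2 * F (y + d) + 2 * F y) := by
        refine integral_mono_of_nonneg (Filter.Eventually.of_forall (fun y => sq_nonneg _))
          ((hFdi.const_mul 2).add (hFi.const_mul 2)) ?_
        filter_upwards [ae_restrict_mem measurableSet_Ioi] with y hy
        exact hpt y hy
    _ = 2 * (∫ y in Ioi (0:ℝ), F (y + d)) + 2 * ∫ y in Ioi (0:ℝ), F y := by
        rw [integral_add (hFdi.const_mul 2) (hFi.const_mul 2), integral_const_mul,
          integral_const_mul]
    _ ≤ 4 * ∫ y in Ioi (0:ℝ), F y := by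
        rw [htrans]
        linarith [hmono]
    _ = 4 * (Jc (2*α+2) * τ ^ ((2*α+2+1)/2)) := by
        rw [hF, Jscale (by linarith) hτ]
    _ ≤ (4 * Jc (2*α+2)) * (d^2 * τ ^ (α + 1/2)) := by
        have hτs : τ ^ ((2*α+2+1)/2) = τ * τ ^ (α+1/2) := by
          rw [show (2*α+2+1)/2 = 1 + (α+1/2) by ring, Real.rpow_add hτ, Real.rpow_one]
        rw [hτs]
        have hJ : (0:ℝ) < Jc (2*α+2) := by
          have h : 0 < Real.Gamma ((2*α+2+1)/2) := Real.Gamma_pos_of_pos (by linarith)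
          have h2 : (0:ℝ) < 2 ^ ((2*α+2+1)/2) := Real.rpow_pos_of_pos (by norm_num) _
          unfold Jc; positivity
        have hτp : (0:ℝ) < τ ^ (α+1/2) := Real.rpow_pos_of_pos hτ _
        have h1 : τ * τ^(α+1/2) ≤ d^2 * τ^(α+1/2) :=
          mul_le_mul_of_nonneg_right hcase hτp.le
        calc 4 * (Jc (2*α+2) * (τ * τ^(α+1/2)))
            = (4 * Jc (2*α+2)) * (τ * τ^(α+1/2)) := by ring
          _ ≤ (4 * Jc (2*α+2)) * (d^2 * τ^(α+1/2)) :=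
              mul_le_mul_of_nonneg_left h1 (by positivity)

lemma core (α : ℝ) (hα : 3/2 < α) {τ : ℝ} (hτ : 0 < τ) {d : ℝ} (hd : 0 ≤ d) :
    (∫ y in Ioi (0:ℝ), ((y+d) ^ (α+1) * Real.exp (-(y+d)^2/(4*τ))
        - y ^ (α+1) * Real.exp (-y^2/(4*τ)))^2)
      ≤ (4 * Jc (2*α+2) + (2*(α+1)^2 * (2^(2*α) * (Jc (2*α) + Jc 0))
          + (1/2) * (2^(2*α+4) * (Jc (2*α+4) + Jc 0)))) * (d^2 * τ ^ (α + 1/2)) := by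
  have hX : (0:ℝ) ≤ d^2 * τ ^ (α + 1/2) := by positivity
  have hJ1 : (0:ℝ) < Jc (2*α+2) := Jc_pos (by linarith)
  have hJ2 : (0:ℝ) < Jc (2*α) := Jc_pos (by linarith)
  have hJ3 : (0:ℝ) < Jc (2*α+4) := Jc_pos (by linarith)
  have hJ0 : (0:ℝ) < Jc 0 := Jc_pos (by norm_num)
  have h2a : (0:ℝ) < (2:ℝ)^(2*α) := Real.rpow_pos_of_pos (by norm_num) _
  have h2b : (0:ℝ) < (2:ℝ)^(2*α+4) := Real.rpow_pos_of_pos (by norm_num) _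
  have hKA : (0:ℝ) < 4 * Jc (2*α+2) := by linarith
  have hKB : (0:ℝ) < 2*(α+1)^2 * (2^(2*α) * (Jc (2*α) + Jc 0))
      + (1/2) * (2^(2*α+4) * (Jc (2*α+4) + Jc 0)) := by
    have h1 : (0:ℝ) < 2*(α+1)^2 := by nlinarith
    have h2 : (0:ℝ) < 2^(2*α) * (Jc (2*α) + Jc 0) := by nlinarith
    have h3 : (0:ℝ) < 2^(2*α+4) * (Jc (2*α+4) + Jc 0) := by nlinarith
    nlinarith
  rcases le_total τ (d^2) with h | h
  · refine (coreA α hα hτ hd h).trans ?_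
    exact mul_le_mul_of_nonneg_right (by linarith) hX
  · refine (coreB α hα hτ hd h).trans ?_
    exact mul_le_mul_of_nonneg_right (by linarith) hX

lemma core_pos (α : ℝ) (hα : 3/2 < α) :
    (0:ℝ) < 4 * Jc (2*α+2) + (2*(α+1)^2 * (2^(2*α) * (Jc (2*α) + Jc 0))
      + (1/2) * (2^(2*α+4) * (Jc (2*α+4) + Jc 0))) := by
  have hJ1 : (0:ℝ) < Jc (2*α+2) := Jc_pos (by linarith)
  have hJ2 : (0:ℝ) < Jc (2*α) := Jc_pos (by linarith)
  have hJ3 : (0:ℝ) < Jc (2*α+4) := Jc_pos (by linarith)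
  have hJ0 : (0:ℝ) < Jc 0 := Jc_pos (by norm_num)
  have h2a : (0:ℝ) < (2:ℝ)^(2*α) := Real.rpow_pos_of_pos (by norm_num) _
  have h2b : (0:ℝ) < (2:ℝ)^(2*α+4) := Real.rpow_pos_of_pos (by norm_num) _
  have h1 : (0:ℝ) < 2*(α+1)^2 := by nlinarith
  have hm1 := mul_pos h1 (mul_pos h2a (add_pos hJ2 hJ0))
  have hm2 := mul_pos h2b (add_pos hJ3 hJ0)
  linarith

lemma ptilde_rw (α τ y : ℝ) (hτ : 0 < τ) (hy : 0 < y) :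
    ptilde τ 0 y * y ^ (α - 1)
      = (τ * Real.sqrt (4*Real.pi*τ))⁻¹ * (y ^ (α+1) * Real.exp (-y^2/(4*τ))) := by
  have hpow : (y:ℝ)^2 * y^(α-1) = y^(α+1) := by
    rw [← Real.rpow_natCast y 2, ← Real.rpow_add hy]
    congr 1; push_cast; ring
  simp only [ptilde, eq_self_iff_true, if_true]
  rw [← hpow]; ring

lemma inner_bound (α : ℝ) (hα : 3/2 < α) {τ : ℝ} (hτ : 0 < τ) {d : ℝ} (hd : 0 ≤ d) :
    (∫ y in Ioi (0:ℝ),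
        (ptilde τ 0 (y + d) * (y + d) ^ (α - 1) - ptilde τ 0 y * y ^ (α - 1)) ^ 2)
      ≤ ((4 * Jc (2*α+2) + (2*(α+1)^2 * (2^(2*α) * (Jc (2*α) + Jc 0))
          + (1/2) * (2^(2*α+4) * (Jc (2*α+4) + Jc 0)))) / (4*Real.pi))
        * (d^2 * τ ^ (α - 5/2)) := by
  set Kc := 4 * Jc (2*α+2) + (2*(α+1)^2 * (2^(2*α) * (Jc (2*α) + Jc 0))
      + (1/2) * (2^(2*α+4) * (Jc (2*α+4) + Jc 0))) with hKc
  have hc2 : (τ * Real.sqrt (4*Real.pi*τ))^2 = 4*Real.pi*τ^3 := by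
    rw [mul_pow, Real.sq_sqrt (by positivity)]; ring
  have hrw : ∀ y ∈ Ioi (0:ℝ),
      (ptilde τ 0 (y + d) * (y + d) ^ (α - 1) - ptilde τ 0 y * y ^ (α - 1)) ^ 2
        = (4*Real.pi*τ^3)⁻¹ * ((y+d) ^ (α+1) * Real.exp (-(y+d)^2/(4*τ))
            - y ^ (α+1) * Real.exp (-y^2/(4*τ)))^2 := by
    intro y hy
    have hy0 : (0:ℝ) < y := hy
    rw [ptilde_rw α τ (y+d) hτ (by linarith), ptilde_rw α τ y hτ hy0, ← mul_sub, mul_pow,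
      ← hc2, inv_pow]
  rw [setIntegral_congr_fun measurableSet_Ioi hrw, integral_const_mul]
  have hcore := core α hα hτ hd
  have hinv : (0:ℝ) ≤ (4*Real.pi*τ^3)⁻¹ := by positivity
  refine (mul_le_mul_of_nonneg_left hcore hinv).trans_eq ?_
  have hpow : τ^(α+1/2) = τ^(3:ℕ) * τ^(α-5/2) := by
    rw [← Real.rpow_natCast τ 3, ← Real.rpow_add hτ]
    congr 1; push_cast; ring
  rw [hpow]
  have hπ : Real.pi ≠ 0 := Real.pi_ne_zero
  have hτ3 : (τ:ℝ)^(3:ℕ) ≠ 0 := by positivity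
  field_simp
  rw [hKc]; ring

theorem g_increment_bound (α : ℝ) (hα : 3/2 < α) (T : ℝ) (hT : 0 < T) :
    ∃ K > 0, ∀ d : ℝ, 0 ≤ d → ∀ t ∈ Set.Ioc (0:ℝ) T,
      (∫ s in Set.Ioc (0:ℝ) t, ∫ y in Set.Ioi (0:ℝ),
          (ptilde (t - s) 0 (y + d) * (y + d) ^ (α - 1) -
            ptilde (t - s) 0 y * y ^ (α - 1)) ^ 2)
        ≤ K * ∫ s in Set.Ioc (0:ℝ) t, d ^ 2 * (t - s) ^ (α - 5/2) ∧
      IntegrableOn (fun s => d ^ 2 * (t - s) ^ (α - 5/2)) (Set.Ioc (0:ℝ) t) := by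
  set Kc := 4 * Jc (2*α+2) + (2*(α+1)^2 * (2^(2*α) * (Jc (2*α) + Jc 0))
      + (1/2) * (2^(2*α+4) * (Jc (2*α+4) + Jc 0))) with hKc
  refine ⟨Kc / (4*Real.pi), div_pos (core_pos α hα) (by positivity), ?_⟩
  intro d hd t ht
  obtain ⟨ht0, htT⟩ := ht
  -- integrability of the comparison function
  have hint0 : IntegrableOn (fun s => d ^ 2 * (t - s) ^ (α - 5/2)) (Set.Ioc (0:ℝ) t) := by
    have h1 : IntervalIntegrable (fun x : ℝ => x ^ (α - 5/2)) volume 0 t :=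
      intervalIntegral.intervalIntegrable_rpow' (by linarith)
    have h2 : IntervalIntegrable (fun x : ℝ => (t - x) ^ (α - 5/2)) volume 0 t := by
      have := (h1.comp_sub_left t).symm
      simpa using this
    have h3 : IntervalIntegrable (fun x : ℝ => d ^ 2 * (t - x) ^ (α - 5/2)) volume 0 t :=
      h2.const_mul _
    rwa [intervalIntegrable_iff_integrableOn_Ioc_of_le ht0.le] at h3
  refine ⟨?_, hint0⟩
  have hmono : (∫ s in Set.Ioc (0:ℝ) t, ∫ y in Set.Ioi (0:ℝ),
      (ptilde (t - s) 0 (y + d) * (y + d) ^ (α - 1) -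
        ptilde (t - s) 0 y * y ^ (α - 1)) ^ 2)
      ≤ ∫ s in Set.Ioc (0:ℝ) t, (Kc / (4*Real.pi)) * (d ^ 2 * (t - s) ^ (α - 5/2)) := by
    refine integral_mono_of_nonneg ?_ ((hint0.const_mul _)) ?_
    · exact Filter.Eventually.of_forall (fun s => integral_nonneg (fun y => sq_nonneg _))
    · have hne : ∀ᵐ s : ℝ ∂(volume.restrict (Set.Ioc (0:ℝ) t)), s ≠ t := by
        refine ae_restrict_of_ae ?_
        have hset : {a : ℝ | ¬ a ≠ t} = {t} := by ext; simp
        rw [ae_iff, hset]; exact measure_singleton t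
      filter_upwards [ae_restrict_mem measurableSet_Ioc, hne] with s hs hsne
      have hτ : 0 < t - s := by
        have hlt : s < t := lt_of_le_of_ne hs.2 hsne
        linarith
      exact inner_bound α hα hτ hd
  refine hmono.trans_eq ?_
  rw [integral_const_mul]
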